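/- Let r ≥ 2 and n ≥ max{8, 2r+1}, let Ω_S be the set of all 2r-regular simple graphs on vertex set {1,…,n} and Ω_F the subset of connected such graphs, and let h : Ω_S → Ω_F be the chaining map. Then for every G ∈ Ω_F, the number of preimages satisfies |h^{-1}(G)| ≤ 2rn. -/

import Mathlib

open scoped Classical

noncomputable section

/-- The entry vertex of a connected component: its highest-labelled vertex. -/
def entry {n : ℕ} (G : SimpleGraph (Fin n)) (C : G.ConnectedComponent) : Fin n :=
  (Set.toFinite C.supp).toFinset.max' (by
    obtain ⟨w, hw⟩ := C.exists_rep
    exact ⟨w, by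
      simp only [Set.Finite.mem_toFinset, SimpleGraph.ConnectedComponent.mem_supp_iff]
      exact hw⟩)

/-- The exit vertex of a connected component: the highest-labelled neighbour of its
entry vertex. -/
def exitV {n : ℕ} (G : SimpleGraph (Fin n)) (C : G.ConnectedComponent) : Fin n :=
  ((Set.toFinite (G.neighborSet (entry G C))).toFinset.max).getD (entry G C)

/-- The cyclic successor of a component in the ordering of components by entry vertex:
the component with least entry vertex among those with a larger entry vertex, wrapping
around to the component with the overall least entry vertex. -/
def nextComp {n : ℕ} (G : SimpleGraph (Fin n)) (C : G.ConnectedComponent) :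
    G.ConnectedComponent :=
  letI : Fintype G.ConnectedComponent := Fintype.ofFinite _
  let bigger : Finset G.ConnectedComponent :=
    Finset.univ.filter fun D => entry G C < entry G D
  if hb : bigger.Nonempty then
    G.connectedComponentMk ((bigger.image (entry G)).min' (hb.image _))
  else
    G.connectedComponentMk
      (((Finset.univ : Finset G.ConnectedComponent).image (entry G)).min'
        (by
          have : (Finset.univ : Finset G.ConnectedComponent).Nonempty :=
            ⟨C, Finset.mem_univ C⟩
          exact this.image _))

/-- The chaining map `h`: delete the bridge edge (entry–exit) of every component, and
add the chain edges from the exit vertex of each component to the entry vertex of the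
next component in the cyclic order of components by entry vertex.  (For a connected
graph this returns the graph itself.) -/
def chainMap {n : ℕ} (G : SimpleGraph (Fin n)) : SimpleGraph (Fin n) :=
  (G.deleteEdges {e | ∃ C : G.ConnectedComponent, e = s(entry G C, exitV G C)}) ⊔
    SimpleGraph.fromEdgeSet
      {e | ∃ C : G.ConnectedComponent, e = s(exitV G C, entry G (nextComp G C))}

namespace ChainAux

open SimpleGraph

variable {n : ℕ} {H : SimpleGraph (Fin n)}

lemma entry_mem (C : H.ConnectedComponent) : entry H C ∈ C.supp := by
  have h := Finset.max'_mem (Set.toFinite C.supp).toFinset (by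
    obtain ⟨w, hw⟩ := C.exists_rep
    exact ⟨w, by
      simp only [Set.Finite.mem_toFinset, SimpleGraph.ConnectedComponent.mem_supp_iff]
      exact hw⟩)
  simpa [entry, Set.Finite.mem_toFinset] using h

lemma le_entry {C : H.ConnectedComponent} {x : Fin n} (hx : x ∈ C.supp) : x ≤ entry H C := by
  apply Finset.le_max'
  simpa [Set.Finite.mem_toFinset] using hx

lemma comp_entry (C : H.ConnectedComponent) : H.connectedComponentMk (entry H C) = C := by
  have := entry_mem (H := H) C
  simpa [SimpleGraph.ConnectedComponent.mem_supp_iff] using this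

lemma entry_inj {C D : H.ConnectedComponent} (h : entry H C = entry H D) : C = D := by
  rw [← comp_entry (H := H) C, h, comp_entry]

lemma supp_eq_of_mem {C D : H.ConnectedComponent} {x : Fin n} (hC : x ∈ C.supp)
    (hD : x ∈ D.supp) : C = D := by
  rw [SimpleGraph.ConnectedComponent.mem_supp_iff] at hC hD
  rw [← hC, ← hD]

lemma exit_adj {C : H.ConnectedComponent} (hdeg : (H.neighborSet (entry H C)).Nonempty) :
    H.Adj (entry H C) (exitV H C) := by
  classical
  set s := (Set.toFinite (H.neighborSet (entry H C))).toFinset with hs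
  have hsne : s.Nonempty := by
    obtain ⟨w, hw⟩ := hdeg
    exact ⟨w, by simpa [hs, Set.Finite.mem_toFinset] using hw⟩
  have hmax : exitV H C = s.max' hsne := by
    rw [exitV, ← hs, ← Finset.coe_max' hsne]
    rfl
  have := Finset.max'_mem s hsne
  rw [← hmax] at this
  simpa [hs, Set.Finite.mem_toFinset] using this

lemma le_exit {C : H.ConnectedComponent} {w : Fin n} (hw : H.Adj (entry H C) w) :
    w ≤ exitV H C := by
  classical
  set s := (Set.toFinite (H.neighborSet (entry H C))).toFinset with hs
  have hsne : s.Nonempty := ⟨w, by simpa [hs, Set.Finite.mem_toFinset] using hw⟩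
  have hmax : exitV H C = s.max' hsne := by
    rw [exitV, ← hs, ← Finset.coe_max' hsne]
    rfl
  rw [hmax]
  exact Finset.le_max' s w (by simpa [hs, Set.Finite.mem_toFinset] using hw)

lemma exit_mem {C : H.ConnectedComponent} (hdeg : (H.neighborSet (entry H C)).Nonempty) :
    exitV H C ∈ C.supp := by
  have h := exit_adj (H := H) (C := C) hdeg
  have : H.connectedComponentMk (exitV H C) = H.connectedComponentMk (entry H C) :=
    SimpleGraph.ConnectedComponent.connectedComponentMk_eq_of_adj h.symm
  simp only [SimpleGraph.ConnectedComponent.mem_supp_iff]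
  rw [this, comp_entry]

lemma exit_ne {C : H.ConnectedComponent} (hdeg : (H.neighborSet (entry H C)).Nonempty) :
    exitV H C ≠ entry H C :=
  fun h => H.irrefl (h ▸ (exit_adj (H := H) hdeg))

lemma entry_nextComp_of_bigger {C : H.ConnectedComponent}
    (hb : ∃ D : H.ConnectedComponent, entry H C < entry H D) :
    entry H C < entry H (nextComp H C) ∧
      ∀ D, entry H C < entry H D → entry H (nextComp H C) ≤ entry H D := by
  classical
  letI : Fintype H.ConnectedComponent := Fintype.ofFinite _
  obtain ⟨D0, hD0⟩ := hb
  set bigger : Finset H.ConnectedComponent :=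
    Finset.univ.filter fun D => entry H C < entry H D with hbigger
  have hbne : bigger.Nonempty := ⟨D0, by simp [hbigger, hD0]⟩
  have hnext : nextComp H C =
      H.connectedComponentMk ((bigger.image (entry H)).min' (hbne.image _)) := by
    rw [nextComp]
    simp only [← hbigger]
    rw [dif_pos hbne]
  set mval := (bigger.image (entry H)).min' (hbne.image _) with hmval
  have hmem : mval ∈ bigger.image (entry H) := Finset.min'_mem _ _
  obtain ⟨D1, hD1b, hD1⟩ := Finset.mem_image.mp hmem
  have hcomp : nextComp H C = D1 := by
    rw [hnext, ← hD1, comp_entry]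
  have hent : entry H (nextComp H C) = mval := by rw [hcomp, hD1]
  constructor
  · rw [hent, ← hD1]
    exact (Finset.mem_filter.mp hD1b).2
  · intro D hD
    rw [hent]
    exact Finset.min'_le _ _ (Finset.mem_image_of_mem _ (by simp [hbigger, hD]))

lemma entry_nextComp_of_max {C : H.ConnectedComponent}
    (hb : ∀ D : H.ConnectedComponent, entry H D ≤ entry H C) :
    ∀ D, entry H (nextComp H C) ≤ entry H D := by
  classical
  letI : Fintype H.ConnectedComponent := Fintype.ofFinite _
  set bigger : Finset H.ConnectedComponent :=
    Finset.univ.filter fun D => entry H C < entry H D with hbigger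
  have hbne : ¬ bigger.Nonempty := by
    rintro ⟨D, hD⟩
    exact absurd (hb D) (not_le.mpr (Finset.mem_filter.mp hD).2)
  have huniv : ((Finset.univ : Finset H.ConnectedComponent)).Nonempty := ⟨C, Finset.mem_univ C⟩
  have hnext : nextComp H C =
      H.connectedComponentMk
        (((Finset.univ : Finset H.ConnectedComponent).image (entry H)).min'
          (huniv.image _)) := by
    rw [nextComp]
    simp only [← hbigger]
    rw [dif_neg hbne]
  set mval := ((Finset.univ : Finset H.ConnectedComponent).image (entry H)).min'
      (huniv.image _) with hmval
  have hmem : mval ∈ (Finset.univ : Finset H.ConnectedComponent).image (entry H) :=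
    Finset.min'_mem _ _
  obtain ⟨D1, _, hD1⟩ := Finset.mem_image.mp hmem
  have hcomp : nextComp H C = D1 := by rw [hnext, ← hD1, comp_entry]
  intro D
  rw [hcomp, hD1]
  exact Finset.min'_le _ _ (Finset.mem_image_of_mem _ (Finset.mem_univ D))

lemma nextComp_ne {C : H.ConnectedComponent} (h2 : ∃ D : H.ConnectedComponent, D ≠ C) :
    nextComp H C ≠ C := by
  by_cases hb : ∃ D : H.ConnectedComponent, entry H C < entry H D
  · have h1 := (entry_nextComp_of_bigger (H := H) hb).1
    intro he
    rw [he] at h1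
    exact lt_irrefl _ h1
  · push_neg at hb
    obtain ⟨D, hD⟩ := h2
    have hlt : entry H D < entry H C :=
      lt_of_le_of_ne (hb D) (fun h => hD (entry_inj h))
    have hmin := entry_nextComp_of_max (H := H) (C := C) hb D
    intro he
    rw [he] at hmin
    exact lt_irrefl _ (lt_of_le_of_lt hmin hlt)

lemma reach_invariant {V : Type*} {K L : SimpleGraph V} {P : V → Prop}
    (h : ∀ z w, P z → K.Adj z w → P w ∧ L.Adj z w) {x y : V}
    (hr : K.Reachable x y) (hx : P x) : P y ∧ L.Reachable x y := by
  obtain ⟨p⟩ := hr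
  induction p with
  | nil => exact ⟨hx, SimpleGraph.Reachable.refl _⟩
  | cons h' p ih =>
      obtain ⟨hb, hadj⟩ := h _ _ hx h'
      obtain ⟨hy, hreach⟩ := ih hb
      exact ⟨hy, (hadj.reachable).trans hreach⟩

lemma reachable_deleteEdges_of_even {V : Type*} [Fintype V] {H : SimpleGraph V}
    (hev : ∀ v, Even (H.degree v)) {x y : V} (hxy : H.Adj x y) :
    (H.deleteEdges {s(x,y)}).Reachable x y := by
  classical
  by_contra hcon
  set K := H.deleteEdges {s(x,y)} with hK
  set A : Set V := (K.connectedComponentMk y).supp with hA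
  have hyA : y ∈ A := by simp [hA]
  have hxA : x ∉ A := by
    intro hx
    rw [hA, SimpleGraph.ConnectedComponent.mem_supp_iff,
      SimpleGraph.ConnectedComponent.eq] at hx
    exact hcon hx
  have hclose : ∀ z w, z ∈ A → K.Adj z w → w ∈ A := by
    intro z w hz hzw
    rw [hA, SimpleGraph.ConnectedComponent.mem_supp_iff, SimpleGraph.ConnectedComponent.eq] at *
    exact hzw.symm.reachable.trans hz
  set K' : SimpleGraph V :=
    { Adj := fun a b => K.Adj a b ∧ a ∈ A ∧ b ∈ A,
      symm := ⟨by rintro a b ⟨h1, h2, h3⟩; exact ⟨h1.symm, h3, h2⟩⟩,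
      loopless := ⟨by rintro a ⟨h1, _, _⟩; exact K.irrefl h1⟩ } with hK'
  have hKA : ∀ z ∈ A, K'.neighborFinset z = K.neighborFinset z := by
    intro z hz
    ext w
    simp only [SimpleGraph.mem_neighborFinset, hK']
    exact ⟨fun h => h.1, fun h => ⟨h, hz, hclose z w hz h⟩⟩
  have hKO : ∀ z, z ∉ A → K'.neighborFinset z = ∅ := by
    intro z hz
    ext w
    simp only [SimpleGraph.mem_neighborFinset, hK', Finset.notMem_empty, iff_false]
    rintro ⟨_, h2, _⟩
    exact hz h2
  have hKy : K.neighborFinset y = (H.neighborFinset y).erase x := by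
    ext w
    simp only [SimpleGraph.mem_neighborFinset, hK, SimpleGraph.deleteEdges_adj,
      Finset.mem_erase, Set.mem_singleton_iff]
    constructor
    · rintro ⟨h1, h2⟩
      refine ⟨fun hwx => h2 ?_, h1⟩
      subst hwx
      rw [Sym2.eq_swap]
    · rintro ⟨h1, h2⟩
      refine ⟨h2, fun h3 => ?_⟩
      rw [Sym2.eq_iff] at h3
      rcases h3 with ⟨h4, h5⟩ | ⟨h4, h5⟩
      · exact H.irrefl (h4 ▸ hxy)
      · exact h1 h5
  have hKother : ∀ z, z ∈ A → z ≠ y → K.neighborFinset z = H.neighborFinset z := by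
    intro z hz hzy
    have hzx : z ≠ x := fun h => hxA (h ▸ hz)
    ext w
    simp only [SimpleGraph.mem_neighborFinset, hK, SimpleGraph.deleteEdges_adj,
      Set.mem_singleton_iff]
    constructor
    · exact fun h => h.1
    · intro h
      refine ⟨h, fun h3 => ?_⟩
      rw [Sym2.eq_iff] at h3
      rcases h3 with ⟨h4, h5⟩ | ⟨h4, h5⟩
      · exact hzx h4
      · exact hzy h4
  set A' := A.toFinset with hA'
  have hyA' : y ∈ A' := Set.mem_toFinset.mpr hyA
  have hsum1 : ∑ z ∈ A', H.degree z = (∑ z ∈ A', K.degree z) + 1 := by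
    rw [← Finset.add_sum_erase _ _ hyA', ← Finset.add_sum_erase _ _ hyA']
    have h1 : H.degree y = K.degree y + 1 := by
      rw [SimpleGraph.degree, SimpleGraph.degree, hKy]
      rw [Finset.card_erase_add_one (by simpa [SimpleGraph.mem_neighborFinset] using hxy.symm)]
    have h2 : ∀ z ∈ A'.erase y, H.degree z = K.degree z := by
      intro z hz
      obtain ⟨hzy, hzA⟩ := Finset.mem_erase.mp hz
      rw [SimpleGraph.degree, SimpleGraph.degree,
        hKother z (Set.mem_toFinset.mp hzA) hzy]
    rw [Finset.sum_congr rfl h2, h1]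
    omega
  have heven1 : 2 ∣ ∑ z ∈ A', H.degree z :=
    Finset.dvd_sum (fun z _ => (hev z).two_dvd)
  have heven2 : 2 ∣ ∑ z ∈ A', K.degree z := by
    have hs : ∑ z ∈ A', K.degree z = ∑ z ∈ A', K'.degree z := by
      refine Finset.sum_congr rfl ?_
      intro z hz
      rw [SimpleGraph.degree, SimpleGraph.degree, hKA z (Set.mem_toFinset.mp hz)]
    have hs2 : ∑ z ∈ A', K'.degree z = ∑ z : V, K'.degree z := by
      refine Finset.sum_subset (Finset.subset_univ A') ?_
      intro z _ hz
      rw [SimpleGraph.degree, hKO z (fun h => hz (Set.mem_toFinset.mpr h)), Finset.card_empty]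
    rw [hs, hs2]
    exact ⟨_, by convert K'.sum_degrees_eq_twice_card_edges⟩
  rcases heven2 with ⟨k, hk⟩
  rcases heven1 with ⟨l, hl⟩
  omega



section Preimage

lemma adj_of_sym2_eq {V : Type*} {H : SimpleGraph V} {x y u v : V}
    (h : s(x,y) = s(u,v)) (hadj : H.Adj u v) : H.Adj x y := by
  rw [Sym2.eq_iff] at h
  rcases h with ⟨h1, h2⟩ | ⟨h1, h2⟩
  · rw [h1, h2]; exact hadj
  · rw [h1, h2]; exact hadj.symm

lemma adj_mem_supp {V : Type*} {H : SimpleGraph V} {C : H.ConnectedComponent} {x y : V}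
    (hx : x ∈ C.supp) (hadj : H.Adj x y) : y ∈ C.supp := by
  rw [SimpleGraph.ConnectedComponent.mem_supp_iff] at *
  rw [← hx, SimpleGraph.ConnectedComponent.eq]
  exact hadj.symm.reachable

lemma supp_eq_of_mem' {V : Type*} {H : SimpleGraph V} {C D : H.ConnectedComponent} {x : V}
    (hC : x ∈ C.supp) (hD : x ∈ D.supp) : C = D := by
  rw [SimpleGraph.ConnectedComponent.mem_supp_iff] at hC hD
  rw [← hC, ← hD]

variable {r : ℕ} {GS G : SimpleGraph (Fin (n+1))}

lemma nb_nonempty (hreg : GS.IsRegularOfDegree (2*r)) (hrpos : 0 < r) (v : Fin (n+1)) :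
    (GS.neighborSet v).Nonempty := by
  have h1 : 0 < GS.degree v := by rw [hreg v]; omega
  rw [← SimpleGraph.card_neighborSet_eq_degree] at h1
  have := Fintype.card_pos_iff.mp h1
  obtain ⟨⟨w, hw⟩⟩ := this
  exact ⟨w, hw⟩

lemma G_adj_iff (hmap : chainMap GS = G) (x y : Fin (n+1)) : G.Adj x y ↔
    (GS.Adj x y ∧ ¬ ∃ C, s(x,y) = s(entry GS C, exitV GS C)) ∨
    ((∃ C, s(x,y) = s(exitV GS C, entry GS (nextComp GS C))) ∧ x ≠ y) := by
  rw [← hmap]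
  simp only [chainMap, SimpleGraph.sup_adj, SimpleGraph.deleteEdges_adj,
    SimpleGraph.fromEdgeSet_adj, Set.mem_setOf_eq]

lemma exists_comp_ne (hdis : ¬ GS.Connected) (C : GS.ConnectedComponent) :
    ∃ D : GS.ConnectedComponent, D ≠ C := by
  by_contra h
  push_neg at h
  apply hdis
  rw [SimpleGraph.connected_iff]
  refine ⟨fun x y => ?_, ⟨0⟩⟩
  rw [← SimpleGraph.ConnectedComponent.eq]
  rw [h (GS.connectedComponentMk x), h (GS.connectedComponentMk y)]

lemma nextComp_ne' (hdis : ¬ GS.Connected) (C : GS.ConnectedComponent) :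
    nextComp GS C ≠ C :=
  nextComp_ne (exists_comp_ne hdis C)

lemma chain_adj (hreg : GS.IsRegularOfDegree (2*r)) (hrpos : 0 < r)
    (hmap : chainMap GS = G) (hdis : ¬ GS.Connected) (C : GS.ConnectedComponent) :
    G.Adj (exitV GS C) (entry GS (nextComp GS C)) := by
  rw [G_adj_iff hmap]
  right
  refine ⟨⟨C, rfl⟩, ?_⟩
  intro h
  have h1 : exitV GS C ∈ C.supp := exit_mem (nb_nonempty hreg hrpos _)
  have h2 : entry GS (nextComp GS C) ∈ (nextComp GS C).supp := entry_mem _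
  rw [h] at h1
  exact nextComp_ne' hdis C (supp_eq_of_mem' h2 h1)

lemma exit_unique (hreg : GS.IsRegularOfDegree (2*r)) (hrpos : 0 < r)
    (hmap : chainMap GS = G) {C : GS.ConnectedComponent}
    {x y : Fin (n+1)} (hx : x ∈ C.supp) (hy : y ∉ C.supp) (hadj : G.Adj x y)
    (hxe : x ≠ entry GS C) : x = exitV GS C ∧ y = entry GS (nextComp GS C) := by
  rw [G_adj_iff hmap] at hadj
  rcases hadj with ⟨h1, _⟩ | ⟨⟨D, hD⟩, _⟩
  · exact absurd (adj_mem_supp hx h1) hy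
  · rw [Sym2.eq_iff] at hD
    rcases hD with ⟨h1, h2⟩ | ⟨h1, h2⟩
    · have hxD : x ∈ D.supp := by
        rw [h1]; exact exit_mem (nb_nonempty hreg hrpos _)
      have hDC : D = C := supp_eq_of_mem' hxD hx
      rw [hDC] at h1 h2
      exact ⟨h1, h2⟩
    · have hxD : x ∈ (nextComp GS D).supp := by rw [h1]; exact entry_mem _
      have hDC : nextComp GS D = C := supp_eq_of_mem' hxD hx
      rw [hDC] at h1
      exact absurd h1 hxe

lemma entry_leaving (hreg : GS.IsRegularOfDegree (2*r)) (hrpos : 0 < r)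
    (hmap : chainMap GS = G) {C : GS.ConnectedComponent}
    {y : Fin (n+1)} (hy : y ∉ C.supp) (hadj : G.Adj (entry GS C) y) :
    ∃ D, nextComp GS D = C ∧ y = exitV GS D := by
  rw [G_adj_iff hmap] at hadj
  rcases hadj with ⟨h1, _⟩ | ⟨⟨D, hD⟩, _⟩
  · exact absurd (adj_mem_supp (entry_mem C) h1) hy
  · rw [Sym2.eq_iff] at hD
    rcases hD with ⟨h1, h2⟩ | ⟨h1, h2⟩
    · have hxD : entry GS C ∈ D.supp := by
        rw [h1]; exact exit_mem (nb_nonempty hreg hrpos _)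
      have hDC : D = C := supp_eq_of_mem' hxD (entry_mem C)
      rw [hDC] at h1
      exact absurd h1.symm (exit_ne (nb_nonempty hreg hrpos _))
    · have hxD : entry GS C ∈ (nextComp GS D).supp := by rw [h1]; exact entry_mem _
      have hDC : nextComp GS D = C := supp_eq_of_mem' hxD (entry_mem C)
      exact ⟨D, hDC, h2⟩

lemma sameComp_G_adj (hreg : GS.IsRegularOfDegree (2*r)) (hrpos : 0 < r)
    (hmap : chainMap GS = G) (hdis : ¬ GS.Connected)
    {C : GS.ConnectedComponent} {x y : Fin (n+1)} (hx : x ∈ C.supp) (hy : y ∈ C.supp) :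
    G.Adj x y ↔ (GS.Adj x y ∧ s(x,y) ≠ s(entry GS C, exitV GS C)) := by
  rw [G_adj_iff hmap]
  constructor
  · rintro (⟨h1, h2⟩ | ⟨⟨D, hD⟩, hne⟩)
    · exact ⟨h1, fun he => h2 ⟨C, he⟩⟩
    · exfalso
      rw [Sym2.eq_iff] at hD
      rcases hD with ⟨h3, h4⟩ | ⟨h3, h4⟩
      · have hxD : x ∈ D.supp := by rw [h3]; exact exit_mem (nb_nonempty hreg hrpos _)
        have hyN : y ∈ (nextComp GS D).supp := by rw [h4]; exact entry_mem _
        have h5 : D = C := supp_eq_of_mem' hxD hx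
        have h6 : nextComp GS D = C := supp_eq_of_mem' hyN hy
        rw [h5] at h6
        exact nextComp_ne' hdis C h6
      · have hyD : y ∈ D.supp := by rw [h4]; exact exit_mem (nb_nonempty hreg hrpos _)
        have hxN : x ∈ (nextComp GS D).supp := by rw [h3]; exact entry_mem _
        have h5 : D = C := supp_eq_of_mem' hyD hy
        have h6 : nextComp GS D = C := supp_eq_of_mem' hxN hx
        rw [h5] at h6
        exact nextComp_ne' hdis C h6
  · rintro ⟨h1, h2⟩
    left
    refine ⟨h1, ?_⟩
    rintro ⟨D, hD⟩
    rw [Sym2.eq_iff] at hD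
    rcases hD with ⟨h3, h4⟩ | ⟨h3, h4⟩
    · have hxD : x ∈ D.supp := by rw [h3]; exact entry_mem D
      have hDC : D = C := supp_eq_of_mem' hxD hx
      rw [hDC] at h3 h4
      exact h2 (by rw [h3, h4])
    · have hyD : y ∈ D.supp := by rw [h4]; exact entry_mem D
      have hDC : D = C := supp_eq_of_mem' hyD hy
      rw [hDC] at h3 h4
      exact h2 (by rw [h3, h4, Sym2.eq_swap])

end Preimage


def within {V : Type*} (H : SimpleGraph V) (S : Set V) : SimpleGraph V where
  Adj a b := H.Adj a b ∧ a ∈ S ∧ b ∈ S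
  symm := ⟨by rintro a b ⟨h1, h2, h3⟩; exact ⟨h1.symm, h3, h2⟩⟩
  loopless := ⟨by rintro a ⟨h1, _, _⟩; exact H.irrefl h1⟩

lemma within_adj {V : Type*} {H : SimpleGraph V} {S : Set V} {a b : V} :
    (within H S).Adj a b ↔ H.Adj a b ∧ a ∈ S ∧ b ∈ S := Iff.rfl

def Ctop (GS : SimpleGraph (Fin (n+1))) : GS.ConnectedComponent :=
  GS.connectedComponentMk (Fin.last n)

def aOf (GS : SimpleGraph (Fin (n+1))) : Fin (n+1) := exitV GS (Ctop GS)

def v1Of (GS : SimpleGraph (Fin (n+1))) : Fin (n+1) :=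
  entry GS (nextComp GS (Ctop GS))

lemma entry_Ctop (GS : SimpleGraph (Fin (n+1))) : entry GS (Ctop GS) = Fin.last n := by
  refine le_antisymm (Fin.le_last _) (le_entry ?_)
  rw [SimpleGraph.ConnectedComponent.mem_supp_iff]
  rfl

lemma max_entry (GS : SimpleGraph (Fin (n+1))) (D : GS.ConnectedComponent) :
    entry GS D ≤ entry GS (Ctop GS) := by
  rw [entry_Ctop]; exact Fin.le_last _

lemma v1_min (GS : SimpleGraph (Fin (n+1))) (D : GS.ConnectedComponent) :
    v1Of GS ≤ entry GS D :=
  entry_nextComp_of_max (max_entry GS) D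

lemma reachable_patch {V : Type*} {H : SimpleGraph V} {x y : V} (hxy : H.Adj x y)
    (hre : (H.deleteEdges {s(x,y)}).Reachable x y) {u w : V} (h : H.Reachable u w) :
    (H.deleteEdges {s(x,y)}).Reachable u w := by
  have hedge : ∀ a b : V, H.Adj a b → (H.deleteEdges {s(x,y)}).Reachable a b := by
    intro a b hab
    by_cases he : s(a,b) = s(x,y)
    · rw [Sym2.eq_iff] at he
      rcases he with ⟨h1, h2⟩ | ⟨h1, h2⟩
      · subst h1; subst h2; exact hre
      · subst h1; subst h2; exact hre.symm
    · exact SimpleGraph.Adj.reachable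
        (by rw [SimpleGraph.deleteEdges_adj]; exact ⟨hab, by simpa using he⟩)
  obtain ⟨p⟩ := h
  induction p with
  | nil => exact SimpleGraph.Reachable.refl _
  | cons h' p ih => exact (hedge _ _ h').trans ih

section L2

variable {r : ℕ} {GS G : SimpleGraph (Fin (n+1))}

lemma v1_lt_last (hdis : ¬ GS.Connected) : v1Of GS < Fin.last n := by
  obtain ⟨D, hD⟩ := exists_comp_ne hdis (Ctop GS)
  have h1 : entry GS D < Fin.last n := by
    refine lt_of_le_of_ne (Fin.le_last _) (fun h => hD (entry_inj ?_))
    rw [h, entry_Ctop]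
  exact lt_of_le_of_lt (v1_min GS D) h1

lemma a_v1_adj (hreg : GS.IsRegularOfDegree (2*r)) (hrpos : 0 < r)
    (hmap : chainMap GS = G) (hdis : ¬ GS.Connected) : G.Adj (aOf GS) (v1Of GS) :=
  chain_adj hreg hrpos hmap hdis (Ctop GS)

lemma supp_eq_reach (hreg : GS.IsRegularOfDegree (2*r)) (hrpos : 0 < r)
    (hmap : chainMap GS = G) (hdis : ¬ GS.Connected) (C : GS.ConnectedComponent) :
    C.supp = {u | (within (G.deleteEdges {s(aOf GS, v1Of GS)})
        {z | z ≤ entry GS C ∧ entry GS C ≤ entry GS (GS.connectedComponentMk z)}).Reachable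
        (entry GS C) u} := by
  set v := entry GS C with hv
  set S : Set (Fin (n+1)) := {z | z ≤ v ∧ v ≤ entry GS (GS.connectedComponentMk z)} with hS
  set G' := G.deleteEdges {s(aOf GS, v1Of GS)} with hG'
  set W := within G' S with hW
  have hinv1 : ∀ z w : Fin (n+1), z ∈ C.supp → W.Adj z w → w ∈ C.supp ∧ W.Adj z w := by
    intro z w hz hadj
    refine ⟨?_, hadj⟩
    by_contra hw
    obtain ⟨hG'a, hzS, hwS⟩ := (within_adj).mp hadj
    have hGa : G.Adj z w := (SimpleGraph.deleteEdges_adj.mp hG'a).1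
    have hGne : s(z,w) ∉ ({s(aOf GS, v1Of GS)} : Set (Sym2 (Fin (n+1)))) :=
      (SimpleGraph.deleteEdges_adj.mp hG'a).2
    by_cases hze : z = entry GS C
    · subst hze
      obtain ⟨D, hnD, hwD⟩ := entry_leaving hreg hrpos hmap hw hGa
      have hwsupp : w ∈ D.supp := by rw [hwD]; exact exit_mem (nb_nonempty hreg hrpos _)
      have hcompw : GS.connectedComponentMk w = D := by
        rw [← SimpleGraph.ConnectedComponent.mem_supp_iff]; exact hwsupp
      have hvD : v ≤ entry GS D := by
        have := hwS.2
        rwa [hcompw] at this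
      by_cases hbig : ∃ E : GS.ConnectedComponent, entry GS D < entry GS E
      · have h1 := (entry_nextComp_of_bigger hbig).1
        rw [hnD, ← hv] at h1
        exact absurd (lt_of_lt_of_le h1 hvD) (lt_irrefl _)
      · push_neg at hbig
        have hDtop : D = Ctop GS := by
          refine entry_inj (le_antisymm ?_ (hbig _))
          rw [entry_Ctop]; exact Fin.le_last _
        have hwA : w = aOf GS := by rw [hwD, hDtop]; rfl
        have hvv1 : v = v1Of GS := by
          rw [hv]
          rw [hDtop] at hnD
          rw [← hnD]
          rfl
        apply hGne
        rw [hwA, ← hv, hvv1]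
        exact Set.mem_singleton_iff.mpr Sym2.eq_swap
    · obtain ⟨hze', hwe⟩ := exit_unique hreg hrpos hmap hz hw hGa hze
      have hcompw : GS.connectedComponentMk w = nextComp GS C := by
        rw [hwe, comp_entry]
      have h1 : v ≤ w := by
        have := hwS.2
        rw [hcompw, ← hwe] at this
        exact this
      have h2 : w ≤ v := hwS.1
      have h3 : w = v := le_antisymm h2 h1
      have : nextComp GS C = C := entry_inj (by rw [← hwe, h3])
      exact nextComp_ne' hdis C this
  have hinv2 : ∀ z w : Fin (n+1), z ∈ C.supp →
      (GS.deleteEdges {s(entry GS C, exitV GS C)}).Adj z w → w ∈ C.supp ∧ W.Adj z w := by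
    intro z w hz hadj
    obtain ⟨hGS, hne⟩ := SimpleGraph.deleteEdges_adj.mp hadj
    have hwsupp : w ∈ C.supp := adj_mem_supp hz hGS
    refine ⟨hwsupp, (within_adj).mpr ⟨?_, ?_, ?_⟩⟩
    · rw [hG', SimpleGraph.deleteEdges_adj]
      constructor
      · rw [sameComp_G_adj hreg hrpos hmap hdis hz hwsupp]
        exact ⟨hGS, by simpa using hne⟩
      · simp only [Set.mem_singleton_iff]
        intro heq
        rw [Sym2.eq_iff] at heq
        have haC : aOf GS ∈ (Ctop GS).supp := exit_mem (nb_nonempty hreg hrpos _)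
        have hv1C : v1Of GS ∈ (nextComp GS (Ctop GS)).supp := entry_mem _
        rcases heq with ⟨h1, h2⟩ | ⟨h1, h2⟩
        · have e1 : Ctop GS = C := supp_eq_of_mem' (C := Ctop GS) (x := z) (by rw [h1]; exact haC) hz
          have e2 : nextComp GS (Ctop GS) = C := supp_eq_of_mem' (x := w) (by rw [h2]; exact hv1C) hwsupp
          rw [e1] at e2
          exact nextComp_ne' hdis C e2
        · have e1 : Ctop GS = C := supp_eq_of_mem' (C := Ctop GS) (x := w) (by rw [h2]; exact haC) hwsupp
          have e2 : nextComp GS (Ctop GS) = C := supp_eq_of_mem' (x := z) (by rw [h1]; exact hv1C) hz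
          rw [e1] at e2
          exact nextComp_ne' hdis C e2
    · exact ⟨le_entry hz, by
        rw [(SimpleGraph.ConnectedComponent.mem_supp_iff _ _).mp hz]⟩
    · exact ⟨le_entry hwsupp, by
        rw [(SimpleGraph.ConnectedComponent.mem_supp_iff _ _).mp hwsupp]⟩
  apply Set.eq_of_subset_of_subset
  · intro u hu
    have hbadj : GS.Adj (entry GS C) (exitV GS C) := exit_adj (nb_nonempty hreg hrpos _)
    have hKre : (GS.deleteEdges {s(entry GS C, exitV GS C)}).Reachable
        (entry GS C) (exitV GS C) :=
      reachable_deleteEdges_of_even (fun w => by rw [hreg w]; exact even_two_mul r) hbadj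
    have hGSre : GS.Reachable (entry GS C) u := by
      rw [← SimpleGraph.ConnectedComponent.eq, comp_entry,
        (SimpleGraph.ConnectedComponent.mem_supp_iff _ _).mp hu]
    have hKu := reachable_patch hbadj hKre hGSre
    exact (reach_invariant hinv2 hKu (entry_mem C)).2
  · intro u hu
    exact (reach_invariant hinv1 hu (entry_mem C)).1

end L2


section Main

variable {r : ℕ} {GS₁ GS₂ G : SimpleGraph (Fin (n+1))}

def EqAt (GS₁ GS₂ : SimpleGraph (Fin (n+1))) (v : Fin (n+1)) : Prop :=
  ((∃ C : GS₁.ConnectedComponent, entry GS₁ C = v) ↔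
    (∃ C : GS₂.ConnectedComponent, entry GS₂ C = v)) ∧
  ∀ (C₁ : GS₁.ConnectedComponent) (C₂ : GS₂.ConnectedComponent),
    entry GS₁ C₁ = v → entry GS₂ C₂ = v → C₁.supp = C₂.supp

lemma eqAt_symm {v : Fin (n+1)} (h : EqAt GS₁ GS₂ v) : EqAt GS₂ GS₁ v :=
  ⟨h.1.symm, fun C₂ C₁ h2 h1 => (h.2 C₁ C₂ h1 h2).symm⟩

lemma step_dir (h1reg : GS₁.IsRegularOfDegree (2*r)) (h2reg : GS₂.IsRegularOfDegree (2*r))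
    (hrpos : 0 < r) (hmap₁ : chainMap GS₁ = G) (hmap₂ : chainMap GS₂ = G)
    (hdis₁ : ¬GS₁.Connected) (hdis₂ : ¬GS₂.Connected)
    (hFv : v1Of GS₁ = v1Of GS₂) {v : Fin (n+1)}
    (IH : ∀ w : Fin (n+1), w < v → EqAt GS₁ GS₂ w)
    {C₁ : GS₁.ConnectedComponent} (hC₁ : entry GS₁ C₁ = v) :
    ∃ C₂ : GS₂.ConnectedComponent, entry GS₂ C₂ = v := by
  by_cases hv1 : v = v1Of GS₁
  · refine ⟨nextComp GS₂ (Ctop GS₂), ?_⟩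
    show v1Of GS₂ = v
    rw [← hFv, hv1]
  · have hv1lt : v1Of GS₁ < v :=
      lt_of_le_of_ne (hC₁ ▸ v1_min GS₁ C₁) (fun h => hv1 h.symm)
    set F : Finset (Fin (n+1)) := Finset.univ.filter
      (fun w => w < v ∧ ∃ C : GS₁.ConnectedComponent, entry GS₁ C = w) with hF
    have hFne : F.Nonempty := ⟨v1Of GS₁, by
      simp only [hF, Finset.mem_filter, Finset.mem_univ, true_and]
      exact ⟨hv1lt, ⟨nextComp GS₁ (Ctop GS₁), rfl⟩⟩⟩
    set u := F.max' hFne with hu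
    have huF := F.max'_mem hFne
    rw [← hu, hF, Finset.mem_filter] at huF
    obtain ⟨_, hulv, C', hC'⟩ := huF
    have hmax : ∀ w : Fin (n+1), w < v → (∃ C : GS₁.ConnectedComponent, entry GS₁ C = w) →
        w ≤ u := by
      intro w hw hE
      refine F.le_max' w ?_
      rw [hF, Finset.mem_filter]
      exact ⟨Finset.mem_univ w, hw, hE⟩
    obtain ⟨hiff, hsupp⟩ := IH u hulv
    obtain ⟨C₂', hC₂'⟩ := hiff.mp ⟨C', hC'⟩
    have hPP : C'.supp = C₂'.supp := hsupp C' C₂' hC' hC₂'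
    have hbig : ∃ D : GS₁.ConnectedComponent, entry GS₁ C' < entry GS₁ D :=
      ⟨C₁, by rw [hC', hC₁]; exact hulv⟩
    obtain ⟨hlo, hminp⟩ := entry_nextComp_of_bigger hbig
    have hle : entry GS₁ (nextComp GS₁ C') ≤ v := by
      have := hminp C₁ (by rw [hC', hC₁]; exact hulv)
      rwa [hC₁] at this
    have hge : ¬ entry GS₁ (nextComp GS₁ C') < v := by
      intro hlt
      have h2 := hmax _ hlt ⟨nextComp GS₁ C', rfl⟩
      rw [hC'] at hlo
      exact absurd hlo (not_lt.mpr h2)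
    have hnext : entry GS₁ (nextComp GS₁ C') = v := le_antisymm hle (not_lt.mp hge)
    have hadj : G.Adj (exitV GS₁ C') v := by
      have := chain_adj h1reg hrpos hmap₁ hdis₁ C'
      rwa [hnext] at this
    have hxin : exitV GS₁ C' ∈ C₂'.supp := by
      rw [← hPP]; exact exit_mem (nb_nonempty h1reg hrpos _)
    have hvout : v ∉ C₂'.supp := by
      intro hmem
      have hvu := le_entry hmem
      rw [hC₂'] at hvu
      exact absurd (lt_of_le_of_lt hvu hulv) (lt_irrefl _)
    have hxne : exitV GS₁ C' ≠ entry GS₂ C₂' := by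
      rw [hC₂', ← hC']
      exact exit_ne (nb_nonempty h1reg hrpos _)
    obtain ⟨_, h2⟩ := exit_unique h2reg hrpos hmap₂ hxin hvout hadj hxne
    exact ⟨nextComp GS₂ C₂', h2.symm⟩

lemma eqAt_all (h1reg : GS₁.IsRegularOfDegree (2*r)) (h2reg : GS₂.IsRegularOfDegree (2*r))
    (hrpos : 0 < r) (hmap₁ : chainMap GS₁ = G) (hmap₂ : chainMap GS₂ = G)
    (hdis₁ : ¬GS₁.Connected) (hdis₂ : ¬GS₂.Connected)
    (hFv : v1Of GS₁ = v1Of GS₂) (hFa : aOf GS₁ = aOf GS₂) :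
    ∀ v : Fin (n+1), EqAt GS₁ GS₂ v := by
  suffices h : ∀ k : ℕ, ∀ v : Fin (n+1), (v : ℕ) = k → EqAt GS₁ GS₂ v from
    fun v => h v.val v rfl
  intro k
  induction k using Nat.strong_induction_on with
  | _ k ih =>
    intro v hvk
    have IH : ∀ w : Fin (n+1), w < v → EqAt GS₁ GS₂ w := by
      intro w hw
      refine ih w.val ?_ w rfl
      rw [← hvk]
      exact hw
    have IH' : ∀ w : Fin (n+1), w < v → EqAt GS₂ GS₁ w := fun w hw => eqAt_symm (IH w hw)
    constructor
    · constructor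
      · rintro ⟨C₁, hC₁⟩
        exact step_dir h1reg h2reg hrpos hmap₁ hmap₂ hdis₁ hdis₂ hFv IH hC₁
      · rintro ⟨C₂, hC₂⟩
        exact step_dir h2reg h1reg hrpos hmap₂ hmap₁ hdis₂ hdis₁ hFv.symm IH' hC₂
    · intro C₁ C₂ h1 h2
      have hSeq : {z : Fin (n+1) | z ≤ v ∧ v ≤ entry GS₁ (GS₁.connectedComponentMk z)} =
          {z : Fin (n+1) | z ≤ v ∧ v ≤ entry GS₂ (GS₂.connectedComponentMk z)} := by
        ext z
        simp only [Set.mem_setOf_eq]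
        constructor
        · rintro ⟨hz1, hz2⟩
          refine ⟨hz1, ?_⟩
          by_contra hlt
          push_neg at hlt
          obtain ⟨hiff, hsupp⟩ := IH' _ hlt
          obtain ⟨C₁', hC₁'⟩ := hiff.mp ⟨GS₂.connectedComponentMk z, rfl⟩
          have hss := hsupp (GS₂.connectedComponentMk z) C₁' rfl hC₁'
          have hzin : z ∈ C₁'.supp := by
            rw [← hss, SimpleGraph.ConnectedComponent.mem_supp_iff]
          have hcz : GS₁.connectedComponentMk z = C₁' :=
            (SimpleGraph.ConnectedComponent.mem_supp_iff _ _).mp hzin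
          rw [hcz, hC₁'] at hz2
          exact absurd (lt_of_le_of_lt hz2 hlt) (lt_irrefl _)
        · rintro ⟨hz1, hz2⟩
          refine ⟨hz1, ?_⟩
          by_contra hlt
          push_neg at hlt
          obtain ⟨hiff, hsupp⟩ := IH _ hlt
          obtain ⟨C₂', hC₂'⟩ := hiff.mp ⟨GS₁.connectedComponentMk z, rfl⟩
          have hss := hsupp (GS₁.connectedComponentMk z) C₂' rfl hC₂'
          have hzin : z ∈ C₂'.supp := by
            rw [← hss, SimpleGraph.ConnectedComponent.mem_supp_iff]
          have hcz : GS₂.connectedComponentMk z = C₂' :=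
            (SimpleGraph.ConnectedComponent.mem_supp_iff _ _).mp hzin
          rw [hcz, hC₂'] at hz2
          exact absurd (lt_of_le_of_lt hz2 hlt) (lt_irrefl _)
      rw [supp_eq_reach h1reg hrpos hmap₁ hdis₁ C₁,
        supp_eq_reach h2reg hrpos hmap₂ hdis₂ C₂, h1, h2, hSeq, hFa, hFv]

end Main


section Final

variable {r : ℕ} {GS GS₁ GS₂ G : SimpleGraph (Fin (n+1))}

lemma entry_congr {C₁ : GS₁.ConnectedComponent} {C₂ : GS₂.ConnectedComponent}
    (h : C₁.supp = C₂.supp) : entry GS₁ C₁ = entry GS₂ C₂ := by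
  refine le_antisymm (le_entry ?_) (le_entry ?_)
  · rw [← h]; exact entry_mem C₁
  · rw [h]; exact entry_mem C₂

lemma adj_imp (h1reg : GS₁.IsRegularOfDegree (2*r)) (h2reg : GS₂.IsRegularOfDegree (2*r))
    (hrpos : 0 < r) (hmap₁ : chainMap GS₁ = G) (hmap₂ : chainMap GS₂ = G)
    (hdis₁ : ¬GS₁.Connected) (hdis₂ : ¬GS₂.Connected)
    (hsupp : ∀ z : Fin (n+1),
      (GS₁.connectedComponentMk z).supp = (GS₂.connectedComponentMk z).supp)
    {x y : Fin (n+1)} (h : GS₁.Adj x y) : GS₂.Adj x y := by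
  set C₁ := GS₁.connectedComponentMk x with hC₁
  set C₂ := GS₂.connectedComponentMk x with hC₂
  have hx1 : x ∈ C₁.supp := by
    rw [SimpleGraph.ConnectedComponent.mem_supp_iff, hC₁]
  have hy1 : y ∈ C₁.supp := adj_mem_supp hx1 h
  have hss : C₁.supp = C₂.supp := hsupp x
  have hx2 : x ∈ C₂.supp := by rw [← hss]; exact hx1
  have hy2 : y ∈ C₂.supp := by rw [← hss]; exact hy1
  have hentry : entry GS₁ C₁ = entry GS₂ C₂ := entry_congr hss
  have hne1 : entry GS₁ (nextComp GS₁ C₁) ∉ C₁.supp := by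
    intro hm
    exact nextComp_ne' hdis₁ C₁ (supp_eq_of_mem' (entry_mem _) hm)
  have hexit : exitV GS₁ C₁ = exitV GS₂ C₂ := by
    have hadj := chain_adj h1reg hrpos hmap₁ hdis₁ C₁
    have hxin : exitV GS₁ C₁ ∈ C₂.supp := by
      rw [← hss]; exact exit_mem (nb_nonempty h1reg hrpos _)
    have hyout : entry GS₁ (nextComp GS₁ C₁) ∉ C₂.supp := by
      rw [← hss]; exact hne1
    have hxne : exitV GS₁ C₁ ≠ entry GS₂ C₂ := by
      rw [← hentry]; exact exit_ne (nb_nonempty h1reg hrpos _)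
    exact (exit_unique h2reg hrpos hmap₂ hxin hyout hadj hxne).1
  by_cases hb : s(x,y) = s(entry GS₁ C₁, exitV GS₁ C₁)
  · have hadj2 : GS₂.Adj (entry GS₁ C₁) (exitV GS₁ C₁) := by
      rw [hentry, hexit]
      exact exit_adj (nb_nonempty h2reg hrpos _)
    exact adj_of_sym2_eq hb hadj2
  · have hGadj : G.Adj x y := (sameComp_G_adj h1reg hrpos hmap₁ hdis₁ hx1 hy1).mpr ⟨h, hb⟩
    exact ((sameComp_G_adj h2reg hrpos hmap₂ hdis₂ hx2 hy2).mp hGadj).1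

lemma preimages_eq (h1reg : GS₁.IsRegularOfDegree (2*r)) (h2reg : GS₂.IsRegularOfDegree (2*r))
    (hrpos : 0 < r) (hmap₁ : chainMap GS₁ = G) (hmap₂ : chainMap GS₂ = G)
    (hdis₁ : ¬GS₁.Connected) (hdis₂ : ¬GS₂.Connected)
    (hFv : v1Of GS₁ = v1Of GS₂) (hFa : aOf GS₁ = aOf GS₂) : GS₁ = GS₂ := by
  have hall := eqAt_all h1reg h2reg hrpos hmap₁ hmap₂ hdis₁ hdis₂ hFv hFa
  have hsupp : ∀ z : Fin (n+1),
      (GS₁.connectedComponentMk z).supp = (GS₂.connectedComponentMk z).supp := by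
    intro z
    obtain ⟨hiff, hs⟩ := hall (entry GS₁ (GS₁.connectedComponentMk z))
    obtain ⟨C₂, hC₂⟩ := hiff.mp ⟨_, rfl⟩
    have h1 := hs _ C₂ rfl hC₂
    have hz2 : z ∈ C₂.supp := by
      rw [← h1, SimpleGraph.ConnectedComponent.mem_supp_iff]
    have hcz : GS₂.connectedComponentMk z = C₂ :=
      (SimpleGraph.ConnectedComponent.mem_supp_iff _ _).mp hz2
    rw [hcz]
    exact h1
  have hsupp' : ∀ z : Fin (n+1),
      (GS₂.connectedComponentMk z).supp = (GS₁.connectedComponentMk z).supp :=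
    fun z => (hsupp z).symm
  ext x y
  constructor
  · exact adj_imp h1reg h2reg hrpos hmap₁ hmap₂ hdis₁ hdis₂ hsupp
  · exact adj_imp h2reg h1reg hrpos hmap₂ hmap₁ hdis₂ hdis₁ hsupp'

lemma comps_subsingleton (hcon : GS.Connected) (C D : GS.ConnectedComponent) : C = D := by
  obtain ⟨x, rfl⟩ := C.exists_rep
  obtain ⟨y, rfl⟩ := D.exists_rep
  exact SimpleGraph.ConnectedComponent.eq.mpr (hcon.preconnected x y)

lemma chainMap_of_connected (hreg : GS.IsRegularOfDegree (2*r)) (hrpos : 0 < r)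
    (hcon : GS.Connected) : chainMap GS = GS := by
  ext x y
  simp only [chainMap, SimpleGraph.sup_adj, SimpleGraph.deleteEdges_adj,
    SimpleGraph.fromEdgeSet_adj, Set.mem_setOf_eq]
  constructor
  · rintro (⟨h1, _⟩ | ⟨⟨C, hC⟩, hne⟩)
    · exact h1
    · refine adj_of_sym2_eq hC ?_
      have h2 := exit_adj (H := GS) (C := C) (nb_nonempty hreg hrpos _)
      rw [comps_subsingleton hcon (nextComp GS C) C]
      exact h2.symm
  · intro h
    by_cases hbr : ∃ C : GS.ConnectedComponent, s(x,y) = s(entry GS C, exitV GS C)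
    · right
      obtain ⟨C, hC⟩ := hbr
      refine ⟨⟨C, ?_⟩, h.ne⟩
      rw [comps_subsingleton hcon (nextComp GS C) C, hC, Sym2.eq_swap]
    · left
      exact ⟨h, hbr⟩

lemma v1_of_connected (hcon : GS.Connected) : v1Of GS = Fin.last n := by
  rw [v1Of, comps_subsingleton hcon (nextComp GS (Ctop GS)) (Ctop GS), entry_Ctop]

end Final

end ChainAux

/-- Let `r ≥ 2` and `n ≥ max{8, 2r+1}`, let `Ω_S` be the set of all
`2r`-regular simple graphs on `{1,…,n}` and `Ω_F` the subset of connected such graphs,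
and let `h : Ω_S → Ω_F` be the chaining map.  Then for every `G ∈ Ω_F` the number of
preimages satisfies `|h⁻¹(G)| ≤ 2rn`. -/
theorem chainMap_preimage_bound (r n : ℕ) (hr : 2 ≤ r) (h8 : 8 ≤ n) (hn : 2 * r + 1 ≤ n)
    (G : SimpleGraph (Fin n)) (hG : G.Connected) (hGreg : G.IsRegularOfDegree (2 * r)) :
    Set.ncard {GS : SimpleGraph (Fin n) |
        GS.IsRegularOfDegree (2 * r) ∧ chainMap GS = G} ≤ 2 * r * n := by
  classical
  obtain ⟨m, rfl⟩ : ∃ m, n = m + 1 := ⟨n - 1, by omega⟩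
  have hrpos : 0 < r := by omega
  set T : Set (Fin (m+1) × Fin (m+1)) := {p | G.Adj p.1 p.2} with hT
  set S : Set (SimpleGraph (Fin (m+1))) :=
    {GS | GS.IsRegularOfDegree (2 * r) ∧ chainMap GS = G} with hS
  have hmaps : ∀ GS ∈ S, (ChainAux.aOf GS, ChainAux.v1Of GS) ∈ T := by
    rintro GS ⟨hreg, hmap⟩
    show G.Adj (ChainAux.aOf GS) (ChainAux.v1Of GS)
    by_cases hdis : GS.Connected
    · have hfix := ChainAux.chainMap_of_connected hreg hrpos hdis
      have hGG : GS = G := hfix.symm.trans hmap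
      rw [← hGG]
      show GS.Adj (exitV GS (ChainAux.Ctop GS)) (entry GS (nextComp GS (ChainAux.Ctop GS)))
      rw [ChainAux.comps_subsingleton hdis (nextComp GS (ChainAux.Ctop GS)) (ChainAux.Ctop GS)]
      exact (ChainAux.exit_adj (ChainAux.nb_nonempty hreg hrpos _)).symm
    · exact ChainAux.a_v1_adj hreg hrpos hmap hdis
  have hinj : Set.InjOn (fun GS => (ChainAux.aOf GS, ChainAux.v1Of GS)) S := by
    rintro GS₁ ⟨h1reg, hmap₁⟩ GS₂ ⟨h2reg, hmap₂⟩ hF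
    have hFa : ChainAux.aOf GS₁ = ChainAux.aOf GS₂ := congrArg Prod.fst hF
    have hFv : ChainAux.v1Of GS₁ = ChainAux.v1Of GS₂ := congrArg Prod.snd hF
    by_cases hc1 : GS₁.Connected <;> by_cases hc2 : GS₂.Connected
    · have e1 : GS₁ = G :=
        (ChainAux.chainMap_of_connected h1reg hrpos hc1).symm.trans hmap₁
      have e2 : GS₂ = G :=
        (ChainAux.chainMap_of_connected h2reg hrpos hc2).symm.trans hmap₂
      rw [e1, e2]
    · exfalso
      have hv1 : ChainAux.v1Of GS₁ = Fin.last m := ChainAux.v1_of_connected hc1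
      have hv2 : ChainAux.v1Of GS₂ < Fin.last m := ChainAux.v1_lt_last hc2
      rw [← hFv, hv1] at hv2
      exact lt_irrefl _ hv2
    · exfalso
      have hv1 : ChainAux.v1Of GS₂ = Fin.last m := ChainAux.v1_of_connected hc2
      have hv2 : ChainAux.v1Of GS₁ < Fin.last m := ChainAux.v1_lt_last hc1
      rw [hFv, hv1] at hv2
      exact lt_irrefl _ hv2
    · exact ChainAux.preimages_eq h1reg h2reg hrpos hmap₁ hmap₂ hc1 hc2 hFv hFa
  have hcard := Set.ncard_le_ncard_of_injOn _ hmaps hinj (Set.toFinite T)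
  have hTcard : T.ncard = 2 * r * (m + 1) := by
    have h1 : T.ncard = Fintype.card G.Dart := by
      rw [hT, ← Nat.card_coe_set_eq, ← Nat.card_eq_fintype_card]
      refine Nat.card_congr ?_
      exact { toFun := fun p => ⟨(p.1.1, p.1.2), p.2⟩,
              invFun := fun d => ⟨d.toProd, d.adj⟩,
              left_inv := fun p => rfl,
              right_inv := fun d => rfl }
    rw [h1, SimpleGraph.dart_card_eq_sum_degrees]
    have h2 : ∀ v : Fin (m+1), G.degree v = 2 * r := fun v => hGreg v
    rw [Finset.sum_congr rfl (fun v _ => h2 v), Finset.sum_const, Finset.card_univ,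
      Fintype.card_fin, smul_eq_mul, mul_comm]
  rw [hTcard] at hcard
  exact hcard



end
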